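/- arXiv:1406.3233 — 2 statements merged into one kernel-verified Lean document; each statement's English description precedes it below -/
import Mathlib

section
/- Let K be a field with an absolute value |·|_v, and f(X) = a_nXⁿ + … + a₀ ∈ K[X] a polynomial of degree n. Let β₁,…,β_{ℓ+1} be ℓ+1 distinct roots of f, where 0 ≤ ℓ ≤ n−1. Then max{|β₁|_v,…,|β_{ℓ+1}|_v} ≥ c_v(n)·|a_ℓ|_v / |f|_v, where c_v(n) = 1 if v is non-archimedean and c_v(n) = (n+1)⁻¹·2⁻ⁿ if v is archimedean, and |f|_v denotes the maximum of the v-adic absolute values of the coefficients of f. -/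
open Polynomial Finset


section helpers
variable {K : Type*} [Field K] (v : AbsoluteValue K ℝ)

lemma na_sum_le (hna : IsNonarchimedean (fun x : K => v x)) {ι : Type*}
    {C : ℝ} (hC : 0 ≤ C) (s : Finset ι) (x : ι → K)
    (h : ∀ i ∈ s, v (x i) ≤ C) : v (∑ i ∈ s, x i) ≤ C := by
  classical
  induction s using Finset.cons_induction with
  | empty => simpa using hC
  | cons a s ha ih =>
    rw [Finset.sum_cons]
    refine le_trans (hna _ _) (max_le (h a (Finset.mem_cons_self _ _)) (ih ?_))
    exact fun i hi => h i (Finset.mem_cons_of_mem hi)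

lemma coeff_quot (b : K) (q : Polynomial K) (j : ℕ) :
    q.coeff j = ((X - C b) * q).coeff (j + 1) + q.coeff (j + 1) * b := by
  rw [mul_comm, Polynomial.coeff_mul_X_sub_C]; ring

lemma step_arch (b : K) (q : Polynomial K) (B M : ℝ) (hB0 : 0 ≤ B) (hB1 : B < 1)
    (hM : 0 ≤ M) (hb : v b ≤ B)
    (hf : ∀ k, v (((X - C b) * q).coeff k) ≤ M) :
    ∀ j, v (q.coeff j) ≤ M / (1 - B) := by
  have h1B : (0:ℝ) < 1 - B := by linarith
  have key : ∀ i j, q.natDegree + 1 ≤ j + i → v (q.coeff j) ≤ M / (1 - B) := by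
    intro i
    induction i with
    | zero =>
      intro j hj
      rw [Polynomial.coeff_eq_zero_of_natDegree_lt (by omega)]
      simpa using div_nonneg hM h1B.le
    | succ i ih =>
      intro j hj
      rw [coeff_quot b q j]
      have h2 := ih (j + 1) (by omega)
      have h3 : v (q.coeff (j + 1) * b) ≤ (M / (1 - B)) * B := by
        rw [v.map_mul]
        exact mul_le_mul h2 hb (v.nonneg _) (div_nonneg hM h1B.le)
      have h4 := v.add_le (((X - C b) * q).coeff (j + 1)) (q.coeff (j + 1) * b)
      have h5 : M + (M / (1 - B)) * B = M / (1 - B) := by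
        field_simp; ring
      linarith [hf (j + 1)]
  intro j
  exact key (q.natDegree + 1) j (by omega)

lemma step_na (hna : IsNonarchimedean (fun x : K => v x)) (b : K) (q : Polynomial K)
    (M : ℝ) (hM : 0 ≤ M) (hb : v b ≤ 1)
    (hf : ∀ k, v (((X - C b) * q).coeff k) ≤ M) :
    ∀ j, v (q.coeff j) ≤ M := by
  have key : ∀ i j, q.natDegree + 1 ≤ j + i → v (q.coeff j) ≤ M := by
    intro i
    induction i with
    | zero =>
      intro j hj
      rw [Polynomial.coeff_eq_zero_of_natDegree_lt (by omega)]
      simpa using hM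
    | succ i ih =>
      intro j hj
      rw [coeff_quot b q j]
      have h2 := ih (j + 1) (by omega)
      have h3 : v (q.coeff (j + 1) * b) ≤ M := by
        rw [v.map_mul]
        calc v (q.coeff (j+1)) * v b ≤ M * 1 :=
          mul_le_mul h2 hb (v.nonneg _) hM
        _ = M := mul_one M
      exact le_trans (hna _ _) (max_le (hf (j + 1)) h3)
  intro j
  exact key (q.natDegree + 1) j (by omega)

lemma quot_bound_arch {ι : Type*} (β : ι → K) (B : ℝ) (hB0 : 0 ≤ B) (hB1 : B < 1)
    (s : Finset ι) (hβ : ∀ i ∈ s, v (β i) ≤ B) :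
    ∀ M, 0 ≤ M → ∀ h : Polynomial K,
      (∀ k, v (((s.prod fun i => X - C (β i)) * h).coeff k) ≤ M) →
      ∀ j, v (h.coeff j) ≤ M / (1 - B) ^ s.card := by
  classical
  have h1B : (0:ℝ) < 1 - B := by linarith
  induction s using Finset.cons_induction with
  | empty =>
    intro M hM h hc j
    simpa using hc j
  | cons a s ha ih =>
    intro M hM h hc j
    have hq : ∀ k, v (((X - C (β a)) * ((s.prod fun i => X - C (β i)) * h)).coeff k) ≤ M := by
      intro k
      have := hc k
      rwa [Finset.prod_cons, mul_assoc] at this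
    have hstep := step_arch v (β a) _ B M hB0 hB1 hM (hβ a (Finset.mem_cons_self a s)) hq
    have := ih (fun i hi => hβ i (Finset.mem_cons_of_mem hi)) (M / (1 - B))
      (div_nonneg hM h1B.le) h hstep j
    calc v (h.coeff j) ≤ M / (1 - B) / (1 - B) ^ s.card := this
      _ = M / (1 - B) ^ (Finset.cons a s ha).card := by
          rw [Finset.card_cons, div_div, pow_succ]
          ring_nf

lemma quot_bound_na (hna : IsNonarchimedean (fun x : K => v x)) {ι : Type*} (β : ι → K)
    (s : Finset ι) (hβ : ∀ i ∈ s, v (β i) ≤ 1) :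
    ∀ M, 0 ≤ M → ∀ h : Polynomial K,
      (∀ k, v (((s.prod fun i => X - C (β i)) * h).coeff k) ≤ M) →
      ∀ j, v (h.coeff j) ≤ M := by
  classical
  induction s using Finset.cons_induction with
  | empty =>
    intro M hM h hc j
    simpa using hc j
  | cons a s ha ih =>
    intro M hM h hc j
    have hq : ∀ k, v (((X - C (β a)) * ((s.prod fun i => X - C (β i)) * h)).coeff k) ≤ M := by
      intro k
      have := hc k
      rwa [Finset.prod_cons, mul_assoc] at this
    have hstep := step_na v hna (β a) _ M hM (hβ a (Finset.mem_cons_self a s)) hq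
    exact ih (fun i hi => hβ i (Finset.mem_cons_of_mem hi)) M hM h hstep j

end helpers


section helpers2
variable {K : Type*} [Field K] (v : AbsoluteValue K ℝ)

lemma coeff_prod_arch {ι : Type*} (β : ι → K) (B : ℝ) (hB0 : 0 ≤ B) (hB1 : B ≤ 1)
    (s : Finset ι) (hβ : ∀ i ∈ s, v (β i) ≤ B) :
    ∀ k, v ((s.prod fun i => X - C (β i)).coeff k) ≤
      if k = s.card then 1 else (s.card.choose k : ℝ) * B := by
  classical
  induction s using Finset.cons_induction with
  | empty =>
    intro k
    rcases Nat.eq_zero_or_pos k with rfl | hk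
    · simp
    · rw [Finset.prod_empty, Polynomial.coeff_one, if_neg (by omega), Finset.card_empty,
        if_neg (by omega), Nat.choose_eq_zero_of_lt hk]
      simp
  | cons a s ha ih =>
    have ihs := ih (fun i hi => hβ i (Finset.mem_cons_of_mem hi))
    have hba : v (β a) ≤ B := hβ a (Finset.mem_cons_self a s)
    set P : Polynomial K := s.prod fun i => X - C (β i) with hP
    have hkey : ∀ t, v (β a) * v (P.coeff t) ≤ (s.card.choose t : ℝ) * B := by
      intro t
      have h1 := ihs t
      by_cases ht : t = s.card
      · subst ht
        rw [if_pos rfl] at h1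
        rw [Nat.choose_self, Nat.cast_one, one_mul]
        calc v (β a) * v (P.coeff s.card) ≤ B * 1 :=
            mul_le_mul hba h1 (v.nonneg _) hB0
          _ = B := mul_one B
      · rw [if_neg ht] at h1
        have hc0 : (0:ℝ) ≤ (s.card.choose t : ℝ) := by positivity
        calc v (β a) * v (P.coeff t) ≤ B * ((s.card.choose t : ℝ) * B) :=
            mul_le_mul hba h1 (v.nonneg _) hB0
          _ ≤ (s.card.choose t : ℝ) * B := by
            nlinarith [mul_nonneg (mul_nonneg hc0 hB0) (sub_nonneg.mpr hB1)]
    have hprod : (Finset.cons a s ha).prod (fun i => X - C (β i)) = (X - C (β a)) * P := by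
      rw [Finset.prod_cons]
    intro k
    rw [hprod, Finset.card_cons]
    rcases Nat.eq_zero_or_pos k with rfl | hk
    · rw [Polynomial.mul_coeff_zero, if_neg (by omega), Nat.choose_zero_right]
      have : ((X : Polynomial K) - C (β a)).coeff 0 = -(β a) := by simp
      rw [this, v.map_mul, v.map_neg, Nat.cast_one, one_mul]
      have := hkey 0
      have h1 : ((s.card.choose 0 : ℕ) : ℝ) = 1 := by simp
      rw [h1, one_mul] at this
      exact this
    · obtain ⟨j, rfl⟩ : ∃ j, k = j + 1 := ⟨k - 1, by omega⟩
      have hco : ((X - C (β a)) * P).coeff (j + 1) = P.coeff j - P.coeff (j + 1) * β a := by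
        rw [mul_comm, Polynomial.coeff_mul_X_sub_C]
      rw [hco]
      have htri : v (P.coeff j - P.coeff (j + 1) * β a) ≤
          v (P.coeff j) + v (β a) * v (P.coeff (j + 1)) := by
        refine le_trans (v.sub_le_add _ _) ?_
        rw [v.map_mul]
        ring_nf
        exact le_refl _
      by_cases hj : j = s.card
      · have h1 := ihs j
        rw [if_pos hj] at h1
        have h2 : v (β a) * v (P.coeff (j + 1)) ≤ 0 := by
          have := hkey (j + 1)
          rw [hj] at *
          rw [Nat.choose_succ_self] at this
          simpa using this
        rw [if_pos (by omega)]
        linarith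
      · rw [if_neg (by omega)]
        have h1 := ihs j
        rw [if_neg hj] at h1
        have h2 := hkey (j + 1)
        have h3 : ((s.card + 1).choose (j + 1) : ℝ) =
            (s.card.choose j : ℝ) + (s.card.choose (j + 1) : ℝ) := by
          rw [Nat.choose_succ_succ]
          push_cast
          ring
        rw [h3]
        linarith [htri]

lemma coeff_prod_na (hna : IsNonarchimedean (fun x : K => v x)) {ι : Type*} (β : ι → K)
    (B : ℝ) (hB0 : 0 ≤ B) (hB1 : B ≤ 1)
    (s : Finset ι) (hβ : ∀ i ∈ s, v (β i) ≤ B) :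
    ∀ k, v ((s.prod fun i => X - C (β i)).coeff k) ≤
      if k = s.card then 1 else B := by
  classical
  induction s using Finset.cons_induction with
  | empty =>
    intro k
    rcases Nat.eq_zero_or_pos k with rfl | hk
    · simp
    · rw [Finset.prod_empty, Polynomial.coeff_one, if_neg (by omega), Finset.card_empty,
        if_neg (by omega)]
      simpa using hB0
  | cons a s ha ih =>
    have ihs := ih (fun i hi => hβ i (Finset.mem_cons_of_mem hi))
    have hba : v (β a) ≤ B := hβ a (Finset.mem_cons_self a s)
    set P : Polynomial K := s.prod fun i => X - C (β i) with hP
    have hle1 : ∀ t, v (P.coeff t) ≤ 1 := by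
      intro t
      refine le_trans (ihs t) ?_
      split
      · exact le_refl 1
      · exact hB1
    have hkey : ∀ t, v (β a) * v (P.coeff t) ≤ B := by
      intro t
      calc v (β a) * v (P.coeff t) ≤ B * 1 :=
          mul_le_mul hba (hle1 t) (v.nonneg _) hB0
        _ = B := mul_one B
    have hprod : (Finset.cons a s ha).prod (fun i => X - C (β i)) = (X - C (β a)) * P := by
      rw [Finset.prod_cons]
    intro k
    rw [hprod, Finset.card_cons]
    rcases Nat.eq_zero_or_pos k with rfl | hk
    · rw [Polynomial.mul_coeff_zero, if_neg (by omega)]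
      have : ((X : Polynomial K) - C (β a)).coeff 0 = -(β a) := by simp
      rw [this, v.map_mul, v.map_neg]
      exact hkey 0
    · obtain ⟨j, rfl⟩ : ∃ j, k = j + 1 := ⟨k - 1, by omega⟩
      have hco : ((X - C (β a)) * P).coeff (j + 1) = P.coeff j + (-(P.coeff (j + 1) * β a)) := by
        rw [mul_comm, Polynomial.coeff_mul_X_sub_C]
        ring
      rw [hco]
      have htri : v (P.coeff j + (-(P.coeff (j + 1) * β a))) ≤
          max (v (P.coeff j)) (v (β a) * v (P.coeff (j + 1))) := by
        refine le_trans (hna _ _) ?_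
        show v (P.coeff j) ⊔ v (-(P.coeff (j + 1) * β a)) ≤ _
        rw [v.map_neg, v.map_mul]
        exact max_le_max (le_refl _) (le_of_eq (mul_comm _ _))
      by_cases hj : j = s.card
      · rw [if_pos (by omega)]
        refine le_trans htri (max_le ?_ ?_)
        · have h1 := ihs j
          rwa [if_pos hj] at h1
        · exact le_trans (hkey (j + 1)) hB1
      · rw [if_neg (by omega)]
        refine le_trans htri (max_le ?_ (hkey (j + 1)))
        have h1 := ihs j
        rwa [if_neg hj] at h1

lemma prod_dvd_of_distinct_roots {K : Type*} [Field K] {f : Polynomial K} (hf : f ≠ 0)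
    {m : ℕ} (β : Fin m → K) (hinj : Function.Injective β)
    (hroots : ∀ i, f.eval (β i) = 0) :
    (Finset.univ.prod fun i => X - C (β i)) ∣ f := by
  classical
  have hle : (Multiset.map β Finset.univ.val) ≤ f.roots := by
    rw [Multiset.le_iff_count]
    intro a
    by_cases ha : a ∈ Multiset.map β Finset.univ.val
    · have h1 : (Multiset.map β Finset.univ.val).count a = 1 :=
        Multiset.count_eq_one_of_mem (Multiset.Nodup.map hinj Finset.univ.nodup) ha
      rw [h1]
      obtain ⟨i, hi⟩ := Multiset.mem_map.mp ha
      obtain ⟨hi1, hia⟩ := hi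
      subst hia
      rw [Nat.one_le_iff_ne_zero, ← Nat.pos_iff_ne_zero, Multiset.count_pos]
      rw [Polynomial.mem_roots hf]
      exact hroots i
    · rw [Multiset.count_eq_zero_of_notMem ha]
      exact Nat.zero_le _
  have h2 : ((Multiset.map β Finset.univ.val).map fun a => X - C a).prod ∣ f :=
    (Multiset.prod_X_sub_C_dvd_iff_le_roots hf _).mpr hle
  rwa [Multiset.map_map] at h2

end helpers2




/-- Let `K` be a field with an absolute value `v`, and
`f(X) = a_n Xⁿ + … + a₀ ∈ K[X]` of degree `n`. Let `β₁,…,β_{ℓ+1}` be `ℓ+1` distinct roots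
of `f`, `0 ≤ ℓ ≤ n−1`. Then `max_i |β_i|_v ≥ c_v(n)·|a_ℓ|_v / |f|_v`, where `c_v(n) = 1`
for non-archimedean `v` and `c_v(n) = (n+1)⁻¹·2⁻ⁿ` for archimedean `v`, and `|f|_v` is the
maximum of the absolute values of the coefficients of `f`. -/
theorem max_abs_roots_ge {K : Type*} [Field K] (v : AbsoluteValue K ℝ)
    (f : Polynomial K) (hf : f ≠ 0) (n ℓ : ℕ) (hn : f.natDegree = n) (hℓ : ℓ < n)
    (β : Fin (ℓ + 1) → K) (hinj : Function.Injective β)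
    (hroots : ∀ i, f.eval (β i) = 0)
    (fnorm : ℝ)
    (hfnorm : fnorm = ((f.support.sup fun k => (v (f.coeff k)).toNNReal : NNReal) : ℝ)) :
    (IsNonarchimedean (fun x => v x) →
      1 * (v (f.coeff ℓ) / fnorm) ≤ Finset.univ.sup' Finset.univ_nonempty fun i => v (β i)) ∧
    (¬ IsNonarchimedean (fun x => v x) →
      ((n : ℝ) + 1)⁻¹ * (2 : ℝ)⁻¹ ^ n * (v (f.coeff ℓ) / fnorm) ≤
        Finset.univ.sup' Finset.univ_nonempty fun i => v (β i)) := by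
  classical
  have hM : ∀ k, v (f.coeff k) ≤ fnorm := by
    intro k
    by_cases hk : k ∈ f.support
    · rw [hfnorm]
      have h1 : (v (f.coeff k)).toNNReal ≤ f.support.sup fun k => (v (f.coeff k)).toNNReal :=
        Finset.le_sup (f := fun k => (v (f.coeff k)).toNNReal) hk
      calc v (f.coeff k) = (((v (f.coeff k)).toNNReal : NNReal) : ℝ) :=
            (Real.coe_toNNReal _ (v.nonneg _)).symm
        _ ≤ _ := NNReal.coe_le_coe.mpr h1
    · rw [Polynomial.notMem_support_iff.mp hk, v.map_zero, hfnorm]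
      exact NNReal.coe_nonneg _
  have hM0 : 0 ≤ fnorm := by rw [hfnorm]; exact NNReal.coe_nonneg _
  have hMpos : 0 < fnorm := by
    have h1 : f.coeff f.natDegree ≠ 0 := by
      rw [← Polynomial.leadingCoeff]
      exact Polynomial.leadingCoeff_ne_zero.mpr hf
    exact lt_of_lt_of_le (v.pos h1) (hM _)
  have hratio : v (f.coeff ℓ) / fnorm ≤ 1 := (div_le_one hMpos).mpr (hM ℓ)
  set g : Polynomial K := (Finset.univ : Finset (Fin (ℓ + 1))).prod fun i => X - C (β i)
    with hg
  obtain ⟨q, hfq⟩ : g ∣ f := prod_dvd_of_distinct_roots hf β hinj hroots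
  have hcard : (Finset.univ : Finset (Fin (ℓ + 1))).card = ℓ + 1 := by simp
  set B : ℝ := Finset.univ.sup' Finset.univ_nonempty fun i => v (β i) with hB
  have hβB : ∀ i ∈ (Finset.univ : Finset (Fin (ℓ + 1))), v (β i) ≤ B := by
    intro i _
    rw [hB]
    exact Finset.le_sup' (fun i => v (β i)) (Finset.mem_univ i)
  have hB0 : 0 ≤ B := le_trans (v.nonneg (β 0)) (hβB 0 (Finset.mem_univ 0))
  have hfc : ∀ k,
      v ((((Finset.univ : Finset (Fin (ℓ + 1))).prod fun i => X - C (β i)) * q).coeff k)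
        ≤ fnorm := by
    intro k
    rw [← hg, ← hfq]
    exact hM k
  have hcm : f.coeff ℓ = ∑ p ∈ Finset.HasAntidiagonal.antidiagonal ℓ, g.coeff p.1 * q.coeff p.2 := by
    rw [hfq, Polynomial.coeff_mul]
  have hn1 : 1 ≤ n := by omega
  constructor
  · -- non-archimedean case
    intro hna
    by_cases hB1 : 1 ≤ B
    · calc 1 * (v (f.coeff ℓ) / fnorm) = v (f.coeff ℓ) / fnorm := one_mul _
        _ ≤ 1 := hratio
        _ ≤ B := hB1
    · push_neg at hB1
      have hgco := coeff_prod_na v hna β B hB0 hB1.le Finset.univ hβB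
      have hqco : ∀ j, v (q.coeff j) ≤ fnorm :=
        quot_bound_na v hna β Finset.univ
          (fun i hi => le_trans (hβB i hi) hB1.le) fnorm hM0 q hfc
      have key : v (f.coeff ℓ) ≤ B * fnorm := by
        rw [hcm]
        refine na_sum_le v hna (mul_nonneg hB0 hM0) _ _ ?_
        intro p hp
        have hp1 : p.1 + p.2 = ℓ := Finset.HasAntidiagonal.mem_antidiagonal.mp hp
        have h1 := hgco p.1
        rw [hcard, if_neg (by omega)] at h1
        rw [v.map_mul]
        exact mul_le_mul h1 (hqco p.2) (v.nonneg _) hB0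
      rw [one_mul, div_le_iff₀ hMpos]
      exact key
  · -- archimedean case
    intro _hna
    set ε : ℝ := ((n : ℝ) + 1)⁻¹ * (2 : ℝ)⁻¹ ^ n with hε
    have hε0 : 0 < ε := by positivity
    have h2n : (2 : ℝ)⁻¹ ^ n ≤ 1 / 2 := by
      calc (2 : ℝ)⁻¹ ^ n ≤ (2 : ℝ)⁻¹ ^ 1 :=
            pow_le_pow_of_le_one (by norm_num) (by norm_num) hn1
        _ = 1 / 2 := by norm_num
    have hn1' : (1 : ℝ) ≤ (n : ℝ) := by exact_mod_cast hn1
    have hinv1 : ((n : ℝ) + 1)⁻¹ ≤ 1 := by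
      rw [inv_le_one_iff₀]
      right; linarith
    have hεhalf : ε ≤ 1 / 2 := by
      calc ε ≤ 1 * (1 / 2) := mul_le_mul hinv1 h2n (by positivity) (by norm_num)
        _ = 1 / 2 := one_mul _
    by_cases hle : ε ≤ B
    · calc ε * (v (f.coeff ℓ) / fnorm) ≤ ε * 1 :=
            mul_le_mul_of_nonneg_left hratio hε0.le
        _ = ε := mul_one ε
        _ ≤ B := hle
    · push_neg at hle
      have hB1 : B < 1 := lt_of_lt_of_le hle (by linarith)
      have hgco := coeff_prod_arch v β B hB0 hB1.le Finset.univ hβB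
      have hqco : ∀ j, v (q.coeff j) ≤ fnorm / (1 - B) ^ (ℓ + 1) := by
        intro j
        have := quot_bound_arch v β B hB0 hB1 Finset.univ hβB fnorm hM0 q hfc j
        rwa [hcard] at this
      -- (1-B)^(ℓ+1) ≥ 1/2
      have hnε : (n : ℝ) * ε ≤ 1 / 2 := by
        have h1 : (n : ℝ) * ((n : ℝ) + 1)⁻¹ ≤ 1 := by
          rw [← div_eq_mul_inv, div_le_one (by positivity)]
          linarith
        calc (n : ℝ) * ε = ((n : ℝ) * ((n : ℝ) + 1)⁻¹) * (2 : ℝ)⁻¹ ^ n := by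
              rw [hε]; ring
          _ ≤ 1 * (1 / 2) := mul_le_mul h1 h2n (by positivity) (by positivity)
          _ = 1 / 2 := one_mul _
      have hlB : ((ℓ : ℝ) + 1) * B ≤ 1 / 2 := by
        have hln : ((ℓ : ℝ) + 1) ≤ (n : ℝ) := by exact_mod_cast hℓ
        calc ((ℓ : ℝ) + 1) * B ≤ (n : ℝ) * ε :=
              mul_le_mul hln hle.le hB0 (by linarith)
          _ ≤ 1 / 2 := hnε
      have hpow : (1 / 2 : ℝ) ≤ (1 - B) ^ (ℓ + 1) := by
        have hbern : 1 + (ℓ + 1 : ℕ) * (-B) ≤ (1 + (-B)) ^ (ℓ + 1) :=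
          one_add_mul_le_pow (by linarith) (ℓ + 1)
        rw [← sub_eq_add_neg] at hbern
        push_cast at hbern
        linarith
      have hp0 : (0 : ℝ) < (1 - B) ^ (ℓ + 1) := pow_pos (by linarith) _
      have hqco2 : ∀ j, v (q.coeff j) ≤ 2 * fnorm := by
        intro j
        refine le_trans (hqco j) ?_
        rw [div_le_iff₀ hp0]
        nlinarith [mul_nonneg hM0 (sub_nonneg.mpr hpow)]
      have hchoose : ∑ p ∈ Finset.HasAntidiagonal.antidiagonal ℓ, (((ℓ + 1).choose p.1 : ℕ) : ℝ)
          ≤ (2 : ℝ) ^ (ℓ + 1) := by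
        have hnat : ∑ p ∈ Finset.HasAntidiagonal.antidiagonal ℓ, (ℓ + 1).choose p.1 ≤ 2 ^ (ℓ + 1) := by
          rw [Finset.Nat.sum_antidiagonal_eq_sum_range_succ_mk]
          calc ∑ i ∈ Finset.range (ℓ + 1), (ℓ + 1).choose i
              ≤ ∑ i ∈ Finset.range (ℓ + 2), (ℓ + 1).choose i :=
                Finset.sum_le_sum_of_subset (Finset.range_subset_range.mpr (by omega))
            _ = 2 ^ (ℓ + 1) := Nat.sum_range_choose (ℓ + 1)
        exact_mod_cast hnat
      have key : v (f.coeff ℓ) ≤ (2 : ℝ) ^ (ℓ + 1) * (B * (2 * fnorm)) := by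
        rw [hcm]
        calc v (∑ p ∈ Finset.HasAntidiagonal.antidiagonal ℓ, g.coeff p.1 * q.coeff p.2)
            ≤ ∑ p ∈ Finset.HasAntidiagonal.antidiagonal ℓ, v (g.coeff p.1 * q.coeff p.2) :=
              v.sum_le _ _
          _ ≤ ∑ p ∈ Finset.HasAntidiagonal.antidiagonal ℓ,
                (((ℓ + 1).choose p.1 : ℝ)) * (B * (2 * fnorm)) := by
              refine Finset.sum_le_sum ?_
              intro p hp
              have hp1 : p.1 + p.2 = ℓ := Finset.HasAntidiagonal.mem_antidiagonal.mp hp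
              have h1 := hgco p.1
              rw [hcard, if_neg (by omega)] at h1
              rw [v.map_mul]
              calc v (g.coeff p.1) * v (q.coeff p.2)
                  ≤ (((ℓ + 1).choose p.1 : ℝ) * B) * (2 * fnorm) :=
                    mul_le_mul h1 (hqco2 p.2) (v.nonneg _) (by positivity)
                _ = (((ℓ + 1).choose p.1 : ℝ)) * (B * (2 * fnorm)) := by ring
          _ = (∑ p ∈ Finset.HasAntidiagonal.antidiagonal ℓ, (((ℓ + 1).choose p.1 : ℝ)))
                * (B * (2 * fnorm)) := by rw [← Finset.sum_mul]
          _ ≤ (2 : ℝ) ^ (ℓ + 1) * (B * (2 * fnorm)) := by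
              refine mul_le_mul_of_nonneg_right hchoose (by positivity)
      have hdiv : v (f.coeff ℓ) / fnorm ≤ (2 : ℝ) ^ (ℓ + 1) * (B * 2) := by
        rw [div_le_iff₀ hMpos]
        calc v (f.coeff ℓ) ≤ (2 : ℝ) ^ (ℓ + 1) * (B * (2 * fnorm)) := key
          _ = (2 : ℝ) ^ (ℓ + 1) * (B * 2) * fnorm := by ring
      have hfact : ε * ((2 : ℝ) ^ (ℓ + 1) * 2) ≤ 1 := by
        have h2pow : (2 : ℝ) ^ (ℓ + 1) * 2 ≤ (2 : ℝ) ^ (n + 1) := by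
          calc (2 : ℝ) ^ (ℓ + 1) * 2 = (2 : ℝ) ^ (ℓ + 2) := by ring
            _ ≤ (2 : ℝ) ^ (n + 1) := by
                refine pow_le_pow_right₀ (by norm_num) (by omega)
        have hid : (2 : ℝ)⁻¹ ^ n * (2 : ℝ) ^ (n + 1) = 2 := by
          rw [inv_pow, pow_succ]
          field_simp
        calc ε * ((2 : ℝ) ^ (ℓ + 1) * 2)
            ≤ ε * (2 : ℝ) ^ (n + 1) := mul_le_mul_of_nonneg_left h2pow hε0.le
          _ = ((n : ℝ) + 1)⁻¹ * ((2 : ℝ)⁻¹ ^ n * (2 : ℝ) ^ (n + 1)) := by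
              rw [hε]; ring
          _ = ((n : ℝ) + 1)⁻¹ * 2 := by rw [hid]
          _ ≤ 1 := by
              rw [inv_mul_le_iff₀ (by positivity)]
              linarith
      calc ε * (v (f.coeff ℓ) / fnorm) ≤ ε * ((2 : ℝ) ^ (ℓ + 1) * (B * 2)) :=
            mul_le_mul_of_nonneg_left hdiv hε0.le
        _ = (ε * ((2 : ℝ) ^ (ℓ + 1) * 2)) * B := by ring
        _ ≤ 1 * B := mul_le_mul_of_nonneg_right hfact hB0
        _ = B := one_mul B
end

section
/- Let K be a field of characteristic 0 and F(X,Y) = f_n(X)Yⁿ + … + f₀(X) ∈ K[X,Y] with deg_Y F = n and F(0,Y) not identically zero. Factor F(x,Y) = f_n(x)·(Y−y₁)⋯(Y−y_n) with Puiseux series y_i = Σ_{k≥κ_i} a_{ik}·x^{k/e_i}, a_{i,κ_i} ≠ 0. Then the order of vanishing r of F at (0,0), defined as the minimal i+j with ∂^{i+j}F/∂X^i∂Y^j(0,0) ≠ 0, satisfies r = Σ_{i : κ_i > 0} min{1, κ_i/e_i}. -/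
set_option maxRecDepth 10000

open Polynomial

/-- The map sending the variable `X` to the Hahn series `x` and `Y` to the polynomial
variable, turning `F(X,Y)` into `F(x,Y) ∈ L[[x^ℚ]][Y]`. -/
noncomputable def toHahnPoly {K L : Type*} [Field K] [Field L] [Algebra K L]
    (F : MvPolynomial (Fin 2) K) : Polynomial (HahnSeries ℚ L) :=
  MvPolynomial.aeval ![Polynomial.C (HahnSeries.single (1 : ℚ) (1 : L)), Polynomial.X] F

namespace OVAux

/-! ### The Gauss valuation on polynomials over Hahn series -/

variable {L : Type*} [Field L]

local notation "v" => HahnSeries.addVal ℚ L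

/-- Minimum valuation of the coefficients of a polynomial over Hahn series. -/
noncomputable def nuv (P : Polynomial (HahnSeries ℚ L)) : WithTop ℚ :=
  P.support.inf fun j => v (P.coeff j)

lemma nuv_le (P : Polynomial (HahnSeries ℚ L)) (j : ℕ) : nuv P ≤ v (P.coeff j) := by
  by_cases h : j ∈ P.support
  · exact Finset.inf_le h
  · simp [Polynomial.notMem_support_iff.mp h]

lemma le_nuv {P : Polynomial (HahnSeries ℚ L)} {c : WithTop ℚ}
    (h : ∀ j, c ≤ v (P.coeff j)) : c ≤ nuv P :=
  Finset.le_inf fun j _ => h j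

lemma val_ne_top {z : HahnSeries ℚ L} (hz : z ≠ 0) : v z ≠ ⊤ := by
  rw [HahnSeries.addVal_apply_of_ne hz]; exact WithTop.coe_ne_top

lemma nuv_ne_top {P : Polynomial (HahnSeries ℚ L)} (hP : P ≠ 0) : nuv P ≠ ⊤ := by
  intro h
  have := nuv_le P P.natDegree
  rw [h, top_le_iff] at this
  exact val_ne_top (Polynomial.leadingCoeff_ne_zero.mpr hP) this

lemma val_sum_le {ι : Type*} (s : Finset ι) (f : ι → HahnSeries ℚ L) {c : WithTop ℚ}
    (h : ∀ i ∈ s, c ≤ v (f i)) : c ≤ v (∑ i ∈ s, f i) := by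
  classical
  induction s using Finset.cons_induction with
  | empty => simp
  | cons a s ha ih =>
    rw [Finset.sum_cons]
    refine le_trans ?_ ((HahnSeries.addVal ℚ L).map_add _ _)
    exact le_min (h a (Finset.mem_cons_self a s)) (ih fun i hi => h i (Finset.mem_cons_of_mem hi))

lemma val_sum_lt {ι : Type*} (s : Finset ι) (f : ι → HahnSeries ℚ L) {c : WithTop ℚ}
    (hc : c ≠ ⊤) (h : ∀ i ∈ s, c < v (f i)) : c < v (∑ i ∈ s, f i) := by
  classical
  induction s using Finset.cons_induction with
  | empty => simp [lt_top_iff_ne_top, hc]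
  | cons a s ha ih =>
    rw [Finset.sum_cons]
    refine lt_of_lt_of_le ?_ ((HahnSeries.addVal ℚ L).map_add _ _)
    exact lt_min (h a (Finset.mem_cons_self a s)) (ih fun i hi => h i (Finset.mem_cons_of_mem hi))

lemma val_add_eq {a b : HahnSeries ℚ L} (h : v a < v b) : v (a + b) = v a := by
  refine le_antisymm ?_ ?_
  · by_contra hlt
    push_neg at hlt
    have h1 : v a = v (a + b + -b) := by ring_nf
    have h2 : min (v (a+b)) (v (-b)) ≤ v (a + b + -b) := (HahnSeries.addVal ℚ L).map_add _ _
    rw [← h1, (HahnSeries.addVal ℚ L).map_neg] at h2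
    rcases min_le_iff.mp h2 with h3 | h3
    · exact absurd h3 (not_le.mpr hlt)
    · exact absurd h3 (not_le.mpr h)
  · exact le_trans (le_min le_rfl h.le) ((HahnSeries.addVal ℚ L).map_add _ _)

/-- a minimal index realizing nuv -/
lemma exists_min_index {P : Polynomial (HahnSeries ℚ L)} (hP : P ≠ 0) :
    ∃ i, v (P.coeff i) = nuv P ∧ ∀ k, k < i → nuv P < v (P.coeff k) := by
  classical
  obtain ⟨i₀, hi₀, hval⟩ := Finset.exists_mem_eq_inf P.support
    (Polynomial.nonempty_support_iff.mpr hP) (fun j => v (P.coeff j))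
  set S := P.support.filter (fun j => v (P.coeff j) = nuv P) with hS
  have hSne : S.Nonempty := ⟨i₀, Finset.mem_filter.mpr ⟨hi₀, hval.symm⟩⟩
  refine ⟨S.min' hSne, (Finset.mem_filter.mp (S.min'_mem hSne)).2, fun k hk => ?_⟩
  rcases eq_or_lt_of_le (nuv_le P k) with h | h
  · exfalso
    have hk0 : P.coeff k ≠ 0 := by
      intro h0; rw [h0] at h
      exact (nuv_ne_top hP) (by rw [h]; exact (HahnSeries.addVal ℚ L).map_zero)
    have : k ∈ S := Finset.mem_filter.mpr ⟨Polynomial.mem_support_iff.mpr hk0, h.symm⟩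
    exact absurd (S.min'_le k this) (not_le.mpr hk)
  · exact h

/-- **Gauss's lemma** for the valuation `nuv`. -/
theorem nuv_mul (P Q : Polynomial (HahnSeries ℚ L)) : nuv (P * Q) = nuv P + nuv Q := by
  classical
  by_cases hP : P = 0
  · simp [hP, nuv]
  by_cases hQ : Q = 0
  · simp [hQ, nuv]
  obtain ⟨i, hi, hmini⟩ := exists_min_index hP
  obtain ⟨j, hj, hminj⟩ := exists_min_index hQ
  have hPt : nuv P ≠ ⊤ := nuv_ne_top hP
  have hQt : nuv Q ≠ ⊤ := nuv_ne_top hQ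
  refine le_antisymm ?_ ?_
  · refine le_trans (nuv_le _ (i + j)) (le_of_eq ?_)
    rw [Polynomial.coeff_mul]
    have hmem : (i, j) ∈ Finset.HasAntidiagonal.antidiagonal (i + j) := by simp
    rw [← Finset.add_sum_erase _ _ hmem]
    have hrest : nuv P + nuv Q <
        v (∑ x ∈ (Finset.HasAntidiagonal.antidiagonal (i + j)).erase (i, j),
            P.coeff x.1 * Q.coeff x.2) := by
      refine val_sum_lt _ _ (by
        intro h; rcases WithTop.add_eq_top.mp h with h | h
        exacts [hPt h, hQt h]) ?_
      rintro ⟨a, b⟩ hab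
      obtain ⟨hne, hab⟩ := Finset.mem_erase.mp hab
      rw [Finset.HasAntidiagonal.mem_antidiagonal] at hab
      rw [(HahnSeries.addVal ℚ L).map_mul]
      rcases lt_trichotomy a i with h | h | h
      · calc nuv P + nuv Q < v (P.coeff a) + nuv Q := WithTop.add_lt_add_right hQt (hmini a h)
          _ ≤ v (P.coeff a) + v (Q.coeff b) := add_le_add_right (nuv_le Q b) _
      · exfalso; apply hne; simp only [h]
        have : b = j := by omega
        simp [this]
      · have hb : b < j := by omega
        calc nuv P + nuv Q = nuv Q + nuv P := add_comm _ _
          _ < v (Q.coeff b) + nuv P := WithTop.add_lt_add_right hPt (hminj b hb)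
          _ ≤ v (Q.coeff b) + v (P.coeff a) := add_le_add_right (nuv_le P a) _
          _ = v (P.coeff a) + v (Q.coeff b) := add_comm _ _
    have hfirst : v (P.coeff i * Q.coeff j) = nuv P + nuv Q := by
      rw [(HahnSeries.addVal ℚ L).map_mul, hi, hj]
    rw [val_add_eq (by rw [hfirst]; exact hrest), hfirst]
  · refine le_nuv fun k => ?_
    rw [Polynomial.coeff_mul]
    refine val_sum_le _ _ fun x _ => ?_
    rw [(HahnSeries.addVal ℚ L).map_mul]
    exact add_le_add (nuv_le P x.1) (nuv_le Q x.2)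

lemma nuv_C (c : HahnSeries ℚ L) : nuv (C c) = v c := by
  by_cases hc : c = 0
  · simp [hc, nuv]
  · refine le_antisymm ?_ ?_
    · simpa using nuv_le (C c) 0
    · refine le_nuv fun j => ?_
      rcases Nat.eq_zero_or_pos j with h | h
      · simp [h]
      · rw [Polynomial.coeff_C, if_neg (by omega)]
        simp

lemma nuv_one : nuv (1 : Polynomial (HahnSeries ℚ L)) = 0 := by
  rw [← Polynomial.C_1, nuv_C, (HahnSeries.addVal ℚ L).map_one]

lemma nuv_prod {ι : Type*} (s : Finset ι) (P : ι → Polynomial (HahnSeries ℚ L)) :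
    nuv (∏ i ∈ s, P i) = ∑ i ∈ s, nuv (P i) := by
  classical
  induction s using Finset.cons_induction with
  | empty => simpa using nuv_one
  | cons a s ha ih => rw [Finset.prod_cons, Finset.sum_cons, nuv_mul, ih]

lemma nuv_X_sub_C (z : HahnSeries ℚ L) : nuv (X - C z) = min (v z) 0 := by
  refine le_antisymm (le_min ?_ ?_) (le_nuv fun j => ?_)
  · refine le_trans (nuv_le _ 0) (le_of_eq ?_)
    simp [(HahnSeries.addVal ℚ L).map_neg]
  · refine le_trans (nuv_le _ 1) (le_of_eq ?_)
    simp [(HahnSeries.addVal ℚ L).map_one]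
  · match j with
    | 0 => simp [(HahnSeries.addVal ℚ L).map_neg, min_le_left]
    | 1 => simpa [(HahnSeries.addVal ℚ L).map_one] using min_le_right (v z) 0
    | (k+2) => rw [Polynomial.coeff_sub, Polynomial.coeff_X,
        Polynomial.coeff_C, if_neg (by omega), if_neg (by omega)]; simp

lemma val_single {q : ℚ} {c : L} (hc : c ≠ 0) : v (HahnSeries.single q c) = (q : WithTop ℚ) := by
  rw [HahnSeries.addVal_apply_of_ne (HahnSeries.single_ne_zero hc),
    HahnSeries.order_single hc]

lemma nuv_CX_mul_X_sub_C (z : HahnSeries ℚ L) :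
    nuv (C (HahnSeries.single (1:ℚ) (1:L)) * X - C z) = min (v z) 1 := by
  have hx : v (HahnSeries.single (1:ℚ) (1:L)) = (1 : ℚ) := val_single one_ne_zero
  refine le_antisymm (le_min ?_ ?_) (le_nuv fun j => ?_)
  · refine le_trans (nuv_le _ 0) (le_of_eq ?_)
    simp [(HahnSeries.addVal ℚ L).map_neg]
  · refine le_trans (nuv_le _ 1) (le_of_eq ?_)
    simp [coeff_C_mul, hx]
  · match j with
    | 0 => simp [(HahnSeries.addVal ℚ L).map_neg, min_le_left]
    | 1 =>
      rw [Polynomial.coeff_sub, Polynomial.coeff_C, if_neg (by omega), coeff_C_mul]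
      simpa [hx] using min_le_right (v z) 1
    | (k+2) => rw [Polynomial.coeff_sub, coeff_C_mul, Polynomial.coeff_X,
        Polynomial.coeff_C, if_neg (by omega), if_neg (by omega)]; simp

lemma coeff_comp_C_mul_X (P : Polynomial (HahnSeries ℚ L)) (a : HahnSeries ℚ L) (j : ℕ) :
    (P.comp (C a * X)).coeff j = P.coeff j * a ^ j := by
  classical
  rw [Polynomial.comp, Polynomial.eval₂_eq_sum, Polynomial.sum_def, Polynomial.finset_sum_coeff]
  have : ∀ e ∈ P.support, (C (P.coeff e) * (C a * X) ^ e).coeff j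
      = if e = j then P.coeff e * a ^ e else 0 := by
    intro e _
    have he : (C a * X : Polynomial (HahnSeries ℚ L)) ^ e = C (a ^ e) * X ^ e :=
      (mul_pow (C a) X e).trans (by rw [Polynomial.C_pow])
    rw [he, ← mul_assoc, ← Polynomial.C_mul, Polynomial.coeff_C_mul, Polynomial.coeff_X_pow]
    split_ifs with h1 h2 h2
    · rw [mul_one]
    · exact absurd h1.symm h2
    · exact absurd h2.symm h1
    · rw [mul_zero]
  rw [Finset.sum_congr rfl this, Finset.sum_ite_eq' P.support j (fun e => P.coeff e * a ^ e)]
  split_ifs with h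
  · rfl
  · rw [Polynomial.notMem_support_iff.mp h, zero_mul]

/-! ### Finsupp helpers on `Fin 2` -/

lemma finsupp_fin2_eq (d : Fin 2 →₀ ℕ) :
    d = Finsupp.single 0 (d 0) + Finsupp.single 1 (d 1) := by
  ext t
  rw [Finsupp.add_apply]
  revert t
  rw [Fin.forall_fin_two]
  constructor
  · rw [Finsupp.single_eq_same, Finsupp.single_eq_of_ne (by decide), add_zero]
  · rw [Finsupp.single_eq_same, Finsupp.single_eq_of_ne (by decide), zero_add]

lemma single_apply_fin2 (i j : ℕ) :
    (Finsupp.single 0 i + Finsupp.single 1 j : Fin 2 →₀ ℕ) 0 = i ∧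
    (Finsupp.single 0 i + Finsupp.single 1 j : Fin 2 →₀ ℕ) 1 = j := by
  constructor
  · rw [Finsupp.add_apply, Finsupp.single_eq_same, Finsupp.single_eq_of_ne (by decide), add_zero]
  · rw [Finsupp.add_apply, Finsupp.single_eq_same, Finsupp.single_eq_of_ne (by decide), zero_add]

/-! ### Iterated partial derivatives and coefficients -/

variable {K : Type*} [Field K]

lemma iterate_pderiv_monomial (k : Fin 2) (m : ℕ) (d : Fin 2 →₀ ℕ) (a : K) :
    (fun P => MvPolynomial.pderiv k P)^[m] (MvPolynomial.monomial d a) =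
      MvPolynomial.monomial (d - Finsupp.single k m) (a * ((d k).descFactorial m : K)) := by
  induction m with
  | zero => simp
  | succ m ih =>
    rw [Function.iterate_succ_apply', ih, MvPolynomial.pderiv_monomial]
    congr 1
    · rw [tsub_tsub, ← Finsupp.single_add]
    · have h1 : (d - Finsupp.single k m) k = d k - m := by
        rw [Finsupp.tsub_apply, Finsupp.single_eq_same]
      rw [h1, Nat.descFactorial_succ]
      push_cast
      ring

lemma iterate_pderiv_add (k : Fin 2) (m : ℕ) (P Q : MvPolynomial (Fin 2) K) :
    (fun P => MvPolynomial.pderiv k P)^[m] (P + Q) =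
      (fun P => MvPolynomial.pderiv k P)^[m] P + (fun P => MvPolynomial.pderiv k P)^[m] Q := by
  induction m generalizing P Q with
  | zero => rfl
  | succ m ih => rw [Function.iterate_succ_apply', Function.iterate_succ_apply',
      Function.iterate_succ_apply', ih, map_add]

lemma iterate_pderiv_sum (k : Fin 2) (m : ℕ) {ι : Type*} (s : Finset ι)
    (f : ι → MvPolynomial (Fin 2) K) :
    (fun P => MvPolynomial.pderiv k P)^[m] (∑ i ∈ s, f i) =
      ∑ i ∈ s, (fun P => MvPolynomial.pderiv k P)^[m] (f i) := by
  classical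
  induction s using Finset.cons_induction with
  | empty => induction m with
    | zero => rfl
    | succ m ih => rw [Function.iterate_succ_apply', ih]; simp
  | cons a s ha ih =>
    rw [Finset.sum_cons, Finset.sum_cons, iterate_pderiv_add, ih]

lemma eval_iterate_monomial (i j : ℕ) (d : Fin 2 →₀ ℕ) (a : K) :
    MvPolynomial.eval (0 : Fin 2 → K)
      ((fun P => MvPolynomial.pderiv (0 : Fin 2) P)^[i]
        ((fun P => MvPolynomial.pderiv (1 : Fin 2) P)^[j] (MvPolynomial.monomial d a))) =
      if d 0 = i ∧ d 1 = j then (i.factorial * j.factorial : K) * a else 0 := by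
  rw [iterate_pderiv_monomial, iterate_pderiv_monomial]
  have h0 : (d - Finsupp.single (1:Fin 2) j) 0 = d 0 := by
    rw [Finsupp.tsub_apply, Finsupp.single_eq_of_ne (by decide), Nat.sub_zero]
  rw [h0, MvPolynomial.eval_monomial]
  rw [Finsupp.prod_fintype _ _ (fun t => pow_zero _), Fin.prod_univ_two]
  set s := d - Finsupp.single (1:Fin 2) j - Finsupp.single (0:Fin 2) i with hs
  have hs0 : s 0 = d 0 - i := by
    rw [hs, Finsupp.tsub_apply, h0, Finsupp.single_eq_same]
  have hs1 : s 1 = d 1 - j := by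
    rw [hs, Finsupp.tsub_apply, Finsupp.tsub_apply, Finsupp.single_eq_same,
      Finsupp.single_eq_of_ne (by decide), Nat.sub_zero]
  simp only [Pi.zero_apply]
  rw [hs0, hs1]
  rcases lt_trichotomy (d 0) i with h | h | h
  · rw [if_neg (by omega)]
    rw [Nat.descFactorial_eq_zero_iff_lt.mpr h]
    push_cast; ring
  · rcases lt_trichotomy (d 1) j with h' | h' | h'
    · rw [if_neg (by omega)]
      rw [Nat.descFactorial_eq_zero_iff_lt.mpr h']
      push_cast; ring
    · rw [if_pos ⟨h, h'⟩, h, h']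
      simp only [Nat.sub_self, pow_zero, Nat.descFactorial_self]
      ring
    · rw [if_neg (by omega), h, Nat.sub_self, pow_zero]
      rw [zero_pow (show d 1 - j ≠ 0 by omega)]
      ring
  · rw [if_neg (by omega), zero_pow (show d 0 - i ≠ 0 by omega)]
    ring

theorem eval_iterate_eq (F : MvPolynomial (Fin 2) K) (i j : ℕ) :
    MvPolynomial.eval (0 : Fin 2 → K)
      ((fun P => MvPolynomial.pderiv (0 : Fin 2) P)^[i]
        ((fun P => MvPolynomial.pderiv (1 : Fin 2) P)^[j] F)) =
      (i.factorial * j.factorial : K) *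
        F.coeff (Finsupp.single 0 i + Finsupp.single 1 j) := by
  classical
  conv_lhs => rw [← MvPolynomial.support_sum_monomial_coeff F]
  rw [iterate_pderiv_sum, iterate_pderiv_sum, map_sum]
  have : ∀ d ∈ F.support,
      MvPolynomial.eval (0 : Fin 2 → K)
        ((fun P => MvPolynomial.pderiv (0 : Fin 2) P)^[i]
          ((fun P => MvPolynomial.pderiv (1 : Fin 2) P)^[j]
            (MvPolynomial.monomial d (F.coeff d)))) =
      if d = Finsupp.single 0 i + Finsupp.single 1 j then
        (i.factorial * j.factorial : K) * F.coeff d else 0 := by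
    intro d _
    rw [eval_iterate_monomial]
    congr 1
    apply propext
    constructor
    · rintro ⟨h0, h1⟩
      rw [finsupp_fin2_eq d, h0, h1]
    · intro h
      rw [h]
      exact ⟨(single_apply_fin2 i j).1, (single_apply_fin2 i j).2⟩
  rw [Finset.sum_congr rfl this, Finset.sum_ite_eq']
  split_ifs with h
  · rfl
  · rw [MvPolynomial.notMem_support_iff.mp h, mul_zero]

/-! ### Coefficients of `toHahnPoly` -/

variable [Algebra K L]

lemma toHahn_coeff (F : MvPolynomial (Fin 2) K) (j : ℕ) :
    (toHahnPoly (L := L) F).coeff j =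
      ∑ d ∈ F.support.filter (fun d => d 1 = j),
        HahnSeries.single ((d 0 : ℚ)) (algebraMap K L (F.coeff d)) := by
  classical
  rw [toHahnPoly]
  conv_lhs => rw [← MvPolynomial.support_sum_monomial_coeff F]
  rw [map_sum, Polynomial.finset_sum_coeff]
  rw [Finset.sum_filter]
  refine Finset.sum_congr rfl fun d _ => ?_
  rw [MvPolynomial.aeval_monomial, Finsupp.prod_fintype _ _ (fun t => pow_zero _),
    Fin.prod_univ_two]
  simp only [Matrix.cons_val_zero, Matrix.cons_val_one, Matrix.head_cons]
  have hx : (C (HahnSeries.single (1:ℚ) (1:L))) ^ (d 0)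
      = C (HahnSeries.single ((d 0 : ℚ)) (1:L)) := by
    rw [← Polynomial.C_pow, HahnSeries.single_pow]
    norm_num
  have halg : algebraMap K (Polynomial (HahnSeries ℚ L)) (F.coeff d)
      = C (HahnSeries.C (algebraMap K L (F.coeff d))) := by
    rw [Polynomial.algebraMap_apply]
    refine congrArg C ?_
    rw [HahnSeries.algebraMap_apply', PowerSeries.algebraMap_apply, HahnSeries.ofPowerSeries_C]
  rw [hx, halg, ← mul_assoc, ← Polynomial.C_mul, Polynomial.coeff_C_mul, Polynomial.coeff_X_pow]
  have hCs : HahnSeries.C (algebraMap K L (F.coeff d)) * HahnSeries.single ((d 0 : ℚ)) (1:L)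
      = HahnSeries.single ((d 0 : ℚ)) (algebraMap K L (F.coeff d)) := by
    rw [HahnSeries.C_apply, HahnSeries.single_mul_single, zero_add, mul_one]
  split_ifs with h1 h2 h2
  · rw [hCs, mul_one]
  · exact absurd h1.symm h2
  · exact absurd h2.symm h1
  · rw [mul_zero]

lemma coeff_coeff (F : MvPolynomial (Fin 2) K) (i j : ℕ) :
    ((toHahnPoly (L := L) F).coeff j).coeff (i : ℚ) =
      algebraMap K L (F.coeff (Finsupp.single 0 i + Finsupp.single 1 j)) := by
  classical
  rw [toHahn_coeff]
  rw [show ((∑ d ∈ F.support.filter (fun d => d 1 = j),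
      HahnSeries.single ((d 0 : ℚ)) (algebraMap K L (F.coeff d))) : HahnSeries ℚ L).coeff (i:ℚ)
      = ∑ d ∈ F.support.filter (fun d => d 1 = j),
        (HahnSeries.single ((d 0 : ℚ)) (algebraMap K L (F.coeff d))).coeff (i:ℚ) from
    map_sum (HahnSeries.coeff.addMonoidHom (i:ℚ)) _ _]
  rw [Finset.sum_filter]
  have hcongr : ∀ d ∈ F.support,
      (if d 1 = j then
        (HahnSeries.single ((d 0 : ℚ)) (algebraMap K L (F.coeff d))).coeff (i:ℚ) else 0)
      = if d = Finsupp.single 0 i + Finsupp.single 1 j then algebraMap K L (F.coeff d) else 0 := by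
    intro d _
    rw [HahnSeries.coeff_single]
    have hiff : (d 1 = j ∧ (i : ℚ) = ((d 0 : ℕ) : ℚ)) ↔
        d = Finsupp.single 0 i + Finsupp.single 1 j := by
      constructor
      · rintro ⟨h1, h2⟩
        have h0 : d 0 = i := (Nat.cast_inj.mp h2).symm
        rw [finsupp_fin2_eq d, h0, h1]
      · intro h
        rw [h]
        exact ⟨(single_apply_fin2 i j).2, by rw [(single_apply_fin2 i j).1]⟩
    by_cases h1 : d 1 = j
    · by_cases h2 : (i:ℚ) = ((d 0 : ℕ) : ℚ)
      · rw [if_pos h1, if_pos h2, if_pos (hiff.mp ⟨h1, h2⟩)]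
      · rw [if_pos h1, if_neg h2, if_neg (fun h => h2 (hiff.mpr h).2)]
    · rw [if_neg h1, if_neg (fun h => h1 (hiff.mpr h).1)]
  rw [Finset.sum_congr rfl hcongr, Finset.sum_ite_eq']
  split_ifs with h
  · rfl
  · rw [MvPolynomial.notMem_support_iff.mp h, map_zero]

lemma exists_coeff_zero_ne (F : MvPolynomial (Fin 2) K)
    (hF0 : MvPolynomial.aeval ![(0 : Polynomial K), Polynomial.X] F ≠ 0) :
    ∃ j : ℕ, F.coeff (Finsupp.single 0 0 + Finsupp.single 1 j) ≠ 0 := by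
  classical
  by_contra hall
  push_neg at hall
  apply hF0
  conv_lhs => rw [← MvPolynomial.support_sum_monomial_coeff F]
  rw [map_sum]
  refine Finset.sum_eq_zero fun d hd => ?_
  rw [MvPolynomial.aeval_monomial, Finsupp.prod_fintype _ _ (fun t => pow_zero _),
    Fin.prod_univ_two]
  simp only [Matrix.cons_val_zero, Matrix.cons_val_one, Matrix.head_cons]
  by_cases h0 : d 0 = 0
  · have hd' : d = Finsupp.single 0 0 + Finsupp.single 1 (d 1) := by
      conv_lhs => rw [finsupp_fin2_eq d]
      rw [h0]
    have hc : F.coeff d = 0 := by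
      have := hall (d 1)
      rw [← hd'] at this
      exact this
    rw [hc, map_zero, zero_mul]
  · rw [zero_pow h0, zero_mul, mul_zero]

end OVAux

theorem order_of_vanishing_eq_sum {K L : Type*} [Field K] [CharZero K] [Field L] [Algebra K L]
    (F : MvPolynomial (Fin 2) K) (n : ℕ) (hn : n = F.degreeOf 1)
    (hF0 : MvPolynomial.aeval ![(0 : Polynomial K), Polynomial.X] F ≠ 0)
    (y : Fin n → HahnSeries ℚ L) (hy : ∀ i, y i ≠ 0)
    (e : Fin n → ℕ) (he : ∀ i, 0 < e i) (κ : Fin n → ℤ)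
    (hsupp : ∀ i, (y i).support ⊆ {q : ℚ | ∃ k : ℤ, q = (k : ℚ) / (e i : ℚ)})
    (horder : ∀ i, (y i).order = (κ i : ℚ) / (e i : ℚ))
    (hfact : toHahnPoly (L := L) F =
      Polynomial.C (toHahnPoly (L := L) F).leadingCoeff *
        ∏ i, (Polynomial.X - Polynomial.C (y i)))
    (r : ℕ)
    (hr₁ : ∃ i j : ℕ, i + j = r ∧
      MvPolynomial.eval (0 : Fin 2 → K)
        ((fun P => MvPolynomial.pderiv (0 : Fin 2) P)^[i]
          ((fun P => MvPolynomial.pderiv (1 : Fin 2) P)^[j] F)) ≠ 0)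
    (hr₂ : ∀ i j : ℕ, i + j < r →
      MvPolynomial.eval (0 : Fin 2 → K)
        ((fun P => MvPolynomial.pderiv (0 : Fin 2) P)^[i]
          ((fun P => MvPolynomial.pderiv (1 : Fin 2) P)^[j] F)) = 0) :
    (r : ℚ) = ∑ i ∈ Finset.univ.filter (fun i => 0 < κ i),
      min 1 ((κ i : ℚ) / (e i : ℚ)) := by
  classical
  open OVAux in
  set x : HahnSeries ℚ L := HahnSeries.single (1 : ℚ) (1 : L) with hxdef
  set P : Polynomial (HahnSeries ℚ L) := toHahnPoly (L := L) F with hPdef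
  have halg_inj : Function.Injective (algebraMap K L) := (algebraMap K L).injective
  -- coefficient characterization of r
  have hfac_ne : ∀ i j : ℕ, ((i.factorial * j.factorial : K)) ≠ 0 :=
    fun i j => mul_ne_zero (Nat.cast_ne_zero.mpr i.factorial_ne_zero)
      (Nat.cast_ne_zero.mpr j.factorial_ne_zero)
  have hcoeff_iff : ∀ i j : ℕ,
      MvPolynomial.eval (0 : Fin 2 → K)
        ((fun P => MvPolynomial.pderiv (0 : Fin 2) P)^[i]
          ((fun P => MvPolynomial.pderiv (1 : Fin 2) P)^[j] F)) ≠ 0 ↔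
      F.coeff (Finsupp.single 0 i + Finsupp.single 1 j) ≠ 0 := by
    intro i j
    rw [OVAux.eval_iterate_eq]
    constructor
    · intro h hc; exact h (by rw [hc, mul_zero])
    · intro h
      exact mul_ne_zero (hfac_ne i j) h
  obtain ⟨i₀, j₀, hij₀, hne₀⟩ := hr₁
  have hc₀ : F.coeff (Finsupp.single 0 i₀ + Finsupp.single 1 j₀) ≠ 0 := (hcoeff_iff i₀ j₀).mp hne₀
  have hlow : ∀ i j : ℕ, F.coeff (Finsupp.single 0 i + Finsupp.single 1 j) ≠ 0 → r ≤ i + j := by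
    intro i j hc
    by_contra h
    exact (hcoeff_iff i j).mpr hc (hr₂ i j (by omega))
  -- nuv P = 0
  have hP_nonneg : ∀ j : ℕ, (0 : WithTop ℚ) ≤ HahnSeries.addVal ℚ L (P.coeff j) := by
    intro j
    rw [hPdef, OVAux.toHahn_coeff]
    refine OVAux.val_sum_le _ _ fun d hd => ?_
    by_cases hz : algebraMap K L (F.coeff d) = 0
    · rw [hz]
      simp
    · rw [OVAux.val_single hz]
      exact_mod_cast Nat.cast_nonneg' (d 0)
  have hP0 : OVAux.nuv P = 0 := by
    obtain ⟨j₁, hj₁⟩ := OVAux.exists_coeff_zero_ne F hF0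
    refine le_antisymm ?_ (OVAux.le_nuv hP_nonneg)
    have hcc : ((P.coeff j₁).coeff ((0 : ℕ) : ℚ)) ≠ 0 := by
      rw [hPdef, OVAux.coeff_coeff]
      intro h
      exact hj₁ (halg_inj (by rw [h, map_zero]))
    refine le_trans (OVAux.nuv_le P j₁) ?_
    have := HahnSeries.addVal_le_of_coeff_ne_zero hcc
    simpa using this
  have hPne : P ≠ 0 := by
    intro h
    rw [h] at hP0
    simp [OVAux.nuv] at hP0
  have hlc : P.leadingCoeff ≠ 0 := Polynomial.leadingCoeff_ne_zero.mpr hPne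
  -- Q := P.comp (C x * X)
  set Q : Polynomial (HahnSeries ℚ L) := P.comp (Polynomial.C x * Polynomial.X) with hQdef
  have hxpow : ∀ j : ℕ, HahnSeries.addVal ℚ L (x ^ j) = ((j : ℚ) : WithTop ℚ) := by
    intro j
    have : x ^ j = HahnSeries.single ((j : ℚ)) (1 : L) := by
      rw [hxdef, HahnSeries.single_pow, one_pow, nsmul_eq_mul, mul_one]
    rw [this, OVAux.val_single one_ne_zero]
  have hQcoeff : ∀ j : ℕ, HahnSeries.addVal ℚ L (Q.coeff j)
      = HahnSeries.addVal ℚ L (P.coeff j) + ((j : ℚ) : WithTop ℚ) := by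
    intro j
    rw [hQdef, OVAux.coeff_comp_C_mul_X, (HahnSeries.addVal ℚ L).map_mul, hxpow]
  -- nuv Q = r
  have hQr : OVAux.nuv Q = (((r : ℚ)) : WithTop ℚ) := by
    refine le_antisymm ?_ ?_
    · refine le_trans (OVAux.nuv_le Q j₀) ?_
      rw [hQcoeff]
      have h1 : HahnSeries.addVal ℚ L (P.coeff j₀) ≤ ((i₀ : ℚ) : WithTop ℚ) := by
        refine HahnSeries.addVal_le_of_coeff_ne_zero (g := ((i₀ : ℕ) : ℚ)) ?_
        rw [hPdef, OVAux.coeff_coeff]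
        intro h
        exact hc₀ (halg_inj (by rw [h, map_zero]))
      calc HahnSeries.addVal ℚ L (P.coeff j₀) + ((j₀ : ℚ) : WithTop ℚ)
          ≤ ((i₀ : ℚ) : WithTop ℚ) + ((j₀ : ℚ) : WithTop ℚ) := add_le_add_left h1 _
        _ = (((r : ℚ)) : WithTop ℚ) := by
            rw [← WithTop.coe_add]
            congr 1
            exact_mod_cast hij₀
    · refine OVAux.le_nuv fun j => ?_
      rw [hQcoeff]
      have hPj : (((r : ℚ) - (j : ℚ) : ℚ) : WithTop ℚ) ≤ HahnSeries.addVal ℚ L (P.coeff j) := by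
        rw [hPdef, OVAux.toHahn_coeff]
        refine OVAux.val_sum_le _ _ fun d hd => ?_
        obtain ⟨hdsupp, hd1⟩ := Finset.mem_filter.mp hd
        have hcd : F.coeff d ≠ 0 := MvPolynomial.mem_support_iff.mp hdsupp
        have hz : algebraMap K L (F.coeff d) ≠ 0 := fun h => hcd (halg_inj (by rw [h, map_zero]))
        rw [OVAux.val_single hz, WithTop.coe_le_coe]
        have hcd' : F.coeff (Finsupp.single 0 (d 0) + Finsupp.single 1 j) ≠ 0 := by
          rw [← hd1, ← OVAux.finsupp_fin2_eq d]
          exact hcd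
        have := hlow (d 0) j hcd'
        have : (r : ℚ) ≤ (d 0 : ℚ) + (j : ℚ) := by exact_mod_cast this
        linarith
      calc (((r : ℚ)) : WithTop ℚ) = (((r : ℚ) - (j : ℚ) : ℚ) : WithTop ℚ) + ((j : ℚ) : WithTop ℚ) := by
            rw [← WithTop.coe_add]
            congr 1
            ring
        _ ≤ HahnSeries.addVal ℚ L (P.coeff j) + ((j : ℚ) : WithTop ℚ) := add_le_add_left hPj _
  -- factorizations
  have hC1 : OVAux.nuv P = HahnSeries.addVal ℚ L P.leadingCoeff
      + ∑ i, min (HahnSeries.addVal ℚ L (y i)) 0 := by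
    conv_lhs => rw [hfact]
    rw [OVAux.nuv_mul, OVAux.nuv_C, OVAux.nuv_prod]
    congr 1
    exact Finset.sum_congr rfl fun i _ => OVAux.nuv_X_sub_C (y i)
  have hC2 : OVAux.nuv Q = HahnSeries.addVal ℚ L P.leadingCoeff
      + ∑ i, min (HahnSeries.addVal ℚ L (y i)) 1 := by
    have hQeq : Q = Polynomial.C P.leadingCoeff * ∏ i, (Polynomial.C x * Polynomial.X - Polynomial.C (y i)) := by
      rw [hQdef]
      conv_lhs => rw [hfact]
      rw [Polynomial.mul_comp, Polynomial.C_comp, Polynomial.prod_comp]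
      congr 1
      refine Finset.prod_congr rfl fun i _ => ?_
      rw [Polynomial.sub_comp, Polynomial.X_comp, Polynomial.C_comp]
    rw [hQeq, OVAux.nuv_mul, OVAux.nuv_C, OVAux.nuv_prod]
    congr 1
    exact Finset.sum_congr rfl fun i _ => OVAux.nuv_CX_mul_X_sub_C (y i)
  -- pass to rational numbers
  set a : ℚ := P.leadingCoeff.order with hadef
  have hva : HahnSeries.addVal ℚ L P.leadingCoeff = (a : WithTop ℚ) :=
    HahnSeries.addVal_apply_of_ne hlc
  set b : Fin n → ℚ := fun i => (κ i : ℚ) / (e i : ℚ) with hbdef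
  have hvy : ∀ i, HahnSeries.addVal ℚ L (y i) = ((b i : ℚ) : WithTop ℚ) := by
    intro i
    rw [HahnSeries.addVal_apply_of_ne (hy i), horder i]
  have hE1 : (0 : ℚ) = a + ∑ i, min (b i) 0 := by
    have := hP0.symm.trans hC1
    rw [hva] at this
    have h2 : ∀ i : Fin n, min (HahnSeries.addVal ℚ L (y i)) 0 = ((min (b i) 0 : ℚ) : WithTop ℚ) := by
      intro i
      rw [hvy i, ← WithTop.coe_zero, ← WithTop.coe_min]
    rw [Finset.sum_congr rfl (fun i _ => h2 i), ← WithTop.coe_sum, ← WithTop.coe_add] at this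
    exact_mod_cast this
  have hE2 : (r : ℚ) = a + ∑ i, min (b i) 1 := by
    have := hQr.symm.trans hC2
    rw [hva] at this
    have h2 : ∀ i : Fin n, min (HahnSeries.addVal ℚ L (y i)) 1 = ((min (b i) 1 : ℚ) : WithTop ℚ) := by
      intro i
      rw [hvy i, ← WithTop.coe_one, ← WithTop.coe_min]
    rw [Finset.sum_congr rfl (fun i _ => h2 i), ← WithTop.coe_sum, ← WithTop.coe_add] at this
    exact_mod_cast this
  -- final arithmetic
  have hfinal : (r : ℚ) = ∑ i, (min (b i) 1 - min (b i) 0) := by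
    rw [Finset.sum_sub_distrib]
    linarith [hE1, hE2]
  rw [hfinal, Finset.sum_filter]
  refine Finset.sum_congr rfl fun i _ => ?_
  by_cases hκ : 0 < κ i
  · rw [if_pos hκ]
    have hb : 0 < b i := div_pos (by exact_mod_cast hκ) (by exact_mod_cast he i)
    rw [min_eq_right hb.le, min_comm, sub_zero]
  · rw [if_neg hκ]
    push_neg at hκ
    have hb : b i ≤ 0 := div_nonpos_iff.mpr (Or.inr ⟨by exact_mod_cast hκ, by positivity⟩)
    rw [min_eq_left hb, min_eq_left (hb.trans zero_le_one)]
    ring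
end
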